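/- The Sugeno-type trace is positively F-homogeneous: for any positive semidefinite a ∈ Mₙ(ℂ) and any k ≥ 0, ψ_α(kI ∧ a) = min(k, ψ_α(a)), where kI ∧ a denotes the functional calculus of a by x ↦ min(k, x). -/

import Mathlib

open Matrix BigOperators Finset
open scoped ComplexOrder

/-- The `i`-th largest eigenvalue (0-indexed) of a Hermitian matrix. -/
noncomputable def eigDesc {n : ℕ} (a : Matrix (Fin n) (Fin n) ℂ) (ha : a.IsHermitian) (i : Fin n) : ℝ :=
  ha.eigenvalues (Tuple.sort ha.eigenvalues i.rev)

/-- Eigenvalues in decreasing order, extended by `0` beyond the size. `eigN a ha i = λ_{i+1}(a)`. -/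
noncomputable def eigN {n : ℕ} (a : Matrix (Fin n) (Fin n) ℂ) (ha : a.IsHermitian) (i : ℕ) : ℝ :=
  if h : i < n then eigDesc a ha ⟨i, h⟩ else 0

/-- The non-linear trace of Choquet type:
`φ_α(a) = ∑_{i=1}^{n-1} (λ_i(a) - λ_{i+1}(a)) α(i) + λ_n(a) α(n)`. -/
noncomputable def choquetTrace {n : ℕ} (α : ℕ → ℝ) (a : Matrix (Fin n) (Fin n) ℂ)
    (ha : a.IsHermitian) : ℝ :=
  ∑ i ∈ Finset.range n, (eigN a ha i - eigN a ha (i + 1)) * α (i + 1)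

/-- Functional calculus of a Hermitian matrix `a` by a function `f : ℝ → ℝ` on its eigenvalues. -/
noncomputable def funCalc {n : ℕ} (f : ℝ → ℝ) (a : Matrix (Fin n) (Fin n) ℂ)
    (ha : a.IsHermitian) : Matrix (Fin n) (Fin n) ℂ :=
  (ha.eigenvectorUnitary : Matrix (Fin n) (Fin n) ℂ) *
    Matrix.diagonal (fun i => (f (ha.eigenvalues i) : ℂ)) *
    star (ha.eigenvectorUnitary : Matrix (Fin n) (Fin n) ℂ)

/-- The positive semidefinite square root of a positive semidefinite matrix
(as defined in Mathlib of December 2024, since removed). -/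
noncomputable def Matrix.PosSemidef.sqrt {n : Type*} [Fintype n] [DecidableEq n]
    {A : Matrix n n ℂ} (hA : A.PosSemidef) : Matrix n n ℂ :=
  hA.1.eigenvectorUnitary.1 * diagonal ((↑) ∘ (√·) ∘ hA.1.eigenvalues) *
    (star hA.1.eigenvectorUnitary : Matrix n n ℂ)

/-- The absolute value `|a| = (a^* a)^{1/2}` of a matrix. -/
noncomputable def matAbs {n : ℕ} (a : Matrix (Fin n) (Fin n) ℂ) : Matrix (Fin n) (Fin n) ℂ :=
  (Matrix.posSemidef_conjTranspose_mul_self a).sqrt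

theorem matAbs_isHermitian {n : ℕ} (a : Matrix (Fin n) (Fin n) ℂ) : (matAbs a).IsHermitian :=
  by
    unfold matAbs Matrix.PosSemidef.sqrt
    rw [star_eq_conjTranspose]
    apply isHermitian_mul_mul_conjTranspose
    exact isHermitian_diagonal_of_self_adjoint _ (by funext i; simp [Complex.conj_ofReal])

/-- The non-linear trace of Sugeno type: `ψ_α(a) = ⋁_{i=1}^n (λ_i(a) ∧ α(i))`. -/
noncomputable def sugeno {n : ℕ} [NeZero n] (α : ℕ → ℝ) (a : Matrix (Fin n) (Fin n) ℂ)
    (ha : a.IsHermitian) : ℝ :=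
  Finset.univ.sup' Finset.univ_nonempty fun i : Fin n => min (eigDesc a ha i) (α (i + 1))




open Polynomial in
lemma mono_eq_of_perm {n : ℕ} {g₁ g₂ : Fin n → ℝ} (h1 : Monotone g₁) (h2 : Monotone g₂)
    (hp : (List.ofFn g₁).Perm (List.ofFn g₂)) : g₁ = g₂ :=
  List.ofFn_injective (List.Perm.eq_of_sortedLE h1.sortedLE_ofFn h2.sortedLE_ofFn hp)

lemma det_smul_one_sub_conj {n : ℕ} (U : Matrix.unitaryGroup (Fin n) ℂ) (d : Fin n → ℂ) (c : ℂ) :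
    (c • (1 : Matrix (Fin n) (Fin n) ℂ)
      - (U : Matrix (Fin n) (Fin n) ℂ) * Matrix.diagonal d * star (U : Matrix (Fin n) (Fin n) ℂ)).det
      = ∏ i, (c - d i) := by
  have hU : (U : Matrix (Fin n) (Fin n) ℂ) * star (U : Matrix (Fin n) (Fin n) ℂ) = 1 :=
    Matrix.mem_unitaryGroup_iff.mp U.2
  have key : (U : Matrix (Fin n) (Fin n) ℂ) * Matrix.diagonal (fun i => c - d i)
      * star (U : Matrix (Fin n) (Fin n) ℂ)
      = c • (1 : Matrix (Fin n) (Fin n) ℂ)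
        - (U : Matrix (Fin n) (Fin n) ℂ) * Matrix.diagonal d * star (U : Matrix (Fin n) (Fin n) ℂ) := by
    have hd : Matrix.diagonal (fun i : Fin n => c - d i)
        = c • (1 : Matrix (Fin n) (Fin n) ℂ) - Matrix.diagonal d := by
      rw [smul_one_eq_diagonal, ← diagonal_sub]
    rw [hd, Matrix.mul_sub, Matrix.sub_mul, mul_smul_comm, smul_mul_assoc, mul_one, hU]
  rw [← key, det_mul, det_mul, Matrix.det_diagonal, mul_right_comm, ← det_mul, hU, det_one, one_mul]

open Polynomial in
lemma eig_multiset {n : ℕ} {b : Matrix (Fin n) (Fin n) ℂ} (hb : b.IsHermitian)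
    (U : Matrix.unitaryGroup (Fin n) ℂ) (ν : Fin n → ℝ)
    (hU : b = (U : Matrix (Fin n) (Fin n) ℂ) * Matrix.diagonal (fun i => (ν i : ℂ))
        * star (U : Matrix (Fin n) (Fin n) ℂ)) :
    (List.ofFn hb.eigenvalues : Multiset ℝ) = (List.ofFn ν : Multiset ℝ) := by
  have h1 : ∀ c : ℂ, ∏ i, (c - (hb.eigenvalues i : ℂ)) = ∏ i, (c - (ν i : ℂ)) := by
    intro c
    rw [← det_smul_one_sub_conj hb.eigenvectorUnitary (fun i => (hb.eigenvalues i : ℂ)) c,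
        ← det_smul_one_sub_conj U (fun i => (ν i : ℂ)) c]
    congr 1
    rw [← hU]
    congr 1
    exact hb.spectral_theorem.symm
  have h2 : (∏ i, (X - C (hb.eigenvalues i : ℂ))) = ∏ i, (X - C (ν i : ℂ)) := by
    apply Polynomial.funext
    intro c
    simp only [eval_prod, eval_sub, eval_X, eval_C]
    exact h1 c
  have h3 : (Finset.univ.val.map fun i => ((hb.eigenvalues i : ℂ))) =
      Finset.univ.val.map fun i => ((ν i : ℂ)) := by
    have r1 := Polynomial.roots_multiset_prod_X_sub_C
      (Finset.univ.val.map fun i : Fin n => ((hb.eigenvalues i : ℂ)))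
    have r2 := Polynomial.roots_multiset_prod_X_sub_C
      (Finset.univ.val.map fun i : Fin n => ((ν i : ℂ)))
    rw [← r1, ← r2]
    congr 1
    rw [Multiset.map_map, Multiset.map_map]
    simpa [Finset.prod_eq_multiset_prod] using h2
  have h4 : ((List.ofFn hb.eigenvalues).map (fun r : ℝ => (r : ℂ)) : Multiset ℂ)
      = ((List.ofFn ν).map (fun r : ℝ => (r : ℂ)) : Multiset ℂ) := by
    rw [List.map_ofFn, List.map_ofFn]
    simpa [Fin.univ_val_map, Function.comp_def] using h3
  have := Multiset.map_injective (f := fun r : ℝ => (r : ℂ)) Complex.ofReal_injective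
  apply this
  simpa using h4

theorem stmt16' (n : ℕ) [NeZero n] (α : ℕ → ℝ)
    (hnn : ∀ i : ℕ, 1 ≤ i → i ≤ n → 0 ≤ α i)
    (hmono : ∀ i j : ℕ, 1 ≤ i → i ≤ j → j ≤ n → α i ≤ α j)
    (a : Matrix (Fin n) (Fin n) ℂ) (ha : a.PosSemidef) (k : ℝ) (hk : 0 ≤ k)
    (h : (funCalc (fun x => min k x) a ha.1).IsHermitian) :
    sugeno α (funCalc (fun x => min k x) a ha.1) h = min k (sugeno α a ha.1) := by
  set f : ℝ → ℝ := fun x => min k x with hfdef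
  have hf : Monotone f := fun x y hxy => min_le_min le_rfl hxy
  set lam := ha.1.eigenvalues with hlam
  -- the multiset of eigenvalues of funCalc
  have hms : (List.ofFn h.eigenvalues : Multiset ℝ) = (List.ofFn (f ∘ lam) : Multiset ℝ) := by
    apply eig_multiset h ha.1.eigenvectorUnitary (f ∘ lam)
    rfl
  have key : eigDesc (funCalc f a ha.1) h = fun i => f (eigDesc a ha.1 i) := by
    have e1 : h.eigenvalues ∘ Tuple.sort h.eigenvalues
        = (f ∘ lam) ∘ Tuple.sort (f ∘ lam) := by
      apply mono_eq_of_perm (Tuple.monotone_sort _) (Tuple.monotone_sort _)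
      refine ((Tuple.sort h.eigenvalues).ofFn_comp_perm h.eigenvalues).trans ?_
      refine Multiset.coe_eq_coe.mp ?_ |>.trans
        ((Tuple.sort (f ∘ lam)).ofFn_comp_perm (f ∘ lam)).symm
      exact hms
    have e2 : (f ∘ lam) ∘ Tuple.sort (f ∘ lam) = f ∘ (lam ∘ Tuple.sort lam) := by
      apply mono_eq_of_perm (Tuple.monotone_sort _) (hf.comp (Tuple.monotone_sort lam))
      exact ((Tuple.sort (f ∘ lam)).ofFn_comp_perm (f ∘ lam)).trans
        ((Tuple.sort lam).ofFn_comp_perm (f ∘ lam)).symm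
    funext i
    show (h.eigenvalues ∘ Tuple.sort h.eigenvalues) i.rev = _
    rw [e1, e2]
    rfl
  show Finset.univ.sup' _ (fun i : Fin n => min (eigDesc (funCalc f a ha.1) h i) (α (i + 1)))
      = min k (Finset.univ.sup' _ fun i : Fin n => min (eigDesc a ha.1 i) (α (i + 1)))
  rw [key]
  have : ∀ i : Fin n, min (f (eigDesc a ha.1 i)) (α (i + 1))
      = k ⊓ min (eigDesc a ha.1 i) (α (i + 1)) := by
    intro i
    simp only [hfdef]
    rw [min_assoc]
  simp only [this]
  rw [← Finset.sup'_inf_distrib_left]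


/-- the Sugeno-type trace is positively F-homogeneous:
`ψ_α(kI ∧ a) = k ∧ ψ_α(a)`. -/
theorem stmt16 (n : ℕ) [NeZero n] (α : ℕ → ℝ)
    (hnn : ∀ i : ℕ, 1 ≤ i → i ≤ n → 0 ≤ α i)
    (hmono : ∀ i j : ℕ, 1 ≤ i → i ≤ j → j ≤ n → α i ≤ α j)
    (a : Matrix (Fin n) (Fin n) ℂ) (ha : a.PosSemidef) (k : ℝ) (hk : 0 ≤ k)
    (h : (funCalc (fun x => min k x) a ha.1).IsHermitian) :
    sugeno α (funCalc (fun x => min k x) a ha.1) h = min k (sugeno α a ha.1) :=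
  stmt16' n α hnn hmono a ha k hk h
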